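/- Let U ⊆ ℂ be open, let Ω ⊆ U × ℂ be a domain in ℂ², and let Ω̂ be compactly contained in Ω. Let f, g be holomorphic on U and let 0 < κ ≤ K be constants with κ < |f′(x)| and |f′(x)| < K, |g′(x)| < K for all x ∈ U. Then there exist ε₀ > 0, ϱ > 0 and c > 0, depending only on κ, K, Ω and Ω̂, such that the following holds for every ε ∈ (0, ε₀]. Suppose τ, χ : Ω → ℂ are holomorphic with sup_Ω |τ| ≤ ε and sup_Ω |χ| ≤ ε, and suppose the map F(x,y) = (f(x) + τ(x,y), g(x) + χ(x,y)) is a biholomorphism of Ω onto its image Δ = F(Ω). Then for every (x,y) ∈ Ω̂ and every tangent vector (u,v) ∈ ℂ² with |u| ≤ ϱ|v| and v ≠ 0, the vector (ũ, ṽ) = (DF(x,y))⁻¹ (u,v) satisfies |ũ| < ϱ|ṽ| (so the inverse differential preserves the ϱ-vertical cone field), and moreover max(|ũ|, |ṽ|) ≥ c·(κ/(K·ε))·|v| (so vectors in the vertical cone are expanded at rate at least c·κ/(K·ε)). -/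

import Mathlib

open Complex Metric Set

lemma cauchy_fderiv_bound {Ω : Set (ℂ × ℂ)} (hΩ : IsOpen Ω)
    {τ : ℂ × ℂ → ℂ} (hτ : DifferentiableOn ℂ τ Ω)
    {ε δ : ℝ} (hε : 0 < ε) (hδ : 0 < δ)
    (hb : ∀ q ∈ Ω, ‖τ q‖ ≤ ε)
    {p : ℂ × ℂ} (hball : ball p δ ⊆ Ω)
    (q : ℂ × ℂ) : ‖fderiv ℂ τ p q‖ ≤ 3 * ε / δ * ‖q‖ := by
  rcases eq_or_ne q 0 with rfl | hq
  · simp only [map_zero, norm_zero, mul_zero]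
    exact le_refl 0
  · have hqn : (0:ℝ) < ‖q‖ := norm_pos_iff.2 hq
    set w : ℂ × ℂ := ‖q‖⁻¹ • q with hw_def
    have hw : ‖w‖ = 1 := by
      rw [hw_def, norm_smul, norm_inv, norm_norm, inv_mul_cancel₀ hqn.ne']
    set φ : ℂ → ℂ := fun t => τ (p + t • w) with hφ_def
    have hmem : ∀ t ∈ ball (0:ℂ) δ, p + t • w ∈ Ω := by
      intro t ht
      apply hball
      simp only [mem_ball, dist_eq_norm] at ht ⊢
      simpa [norm_smul, hw] using ht
    have hline : Differentiable ℂ (fun t : ℂ => p + t • w) :=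
      (differentiable_id.smul_const w).const_add p
    have hφd : DifferentiableOn ℂ φ (ball 0 δ) :=
      hτ.comp hline.differentiableOn hmem
    have hpΩ : p ∈ Ω := hball (mem_ball_self hδ)
    have hφ0 : φ 0 = τ p := by simp [hφ_def]
    have hmaps : MapsTo φ (ball (0:ℂ) δ) (ball (φ 0) (3 * ε)) := by
      intro t ht
      have h1 : ‖φ t‖ ≤ ε := hb _ (hmem t ht)
      have h2 : ‖φ 0‖ ≤ ε := by rw [hφ0]; exact hb _ hpΩ
      rw [mem_ball, dist_eq_norm]
      calc ‖φ t - φ 0‖ ≤ ‖φ t‖ + ‖φ 0‖ := norm_sub_le _ _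
        _ ≤ ε + ε := add_le_add h1 h2
        _ < 3 * ε := by linarith
    have hSchwarz := Complex.norm_deriv_le_div_of_mapsTo_ball hφd (hmaps.mono_right ball_subset_closedBall) hδ
    have hτp : HasFDerivAt τ (fderiv ℂ τ p) (p + (0:ℂ) • w) := by
      simpa using (hτ.differentiableAt (hΩ.mem_nhds hpΩ)).hasFDerivAt
    have hlineD : HasDerivAt (fun t : ℂ => p + t • w) w 0 := by
      simpa using ((hasDerivAt_id (0:ℂ)).smul_const w).const_add p
    have hder : HasDerivAt φ (fderiv ℂ τ p w) 0 :=
      hτp.comp_hasDerivAt 0 hlineD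
    have hderiv_eq : deriv φ 0 = fderiv ℂ τ p w := hder.deriv
    have hq_eq : (‖q‖ : ℝ) • w = q := by
      rw [hw_def, smul_smul, mul_inv_cancel₀ hqn.ne', one_smul]
    calc ‖fderiv ℂ τ p q‖ = ‖q‖ * ‖fderiv ℂ τ p w‖ := by
          rw [← hq_eq, ContinuousLinearMap.map_smul_of_tower, norm_smul,
            Real.norm_of_nonneg (norm_nonneg q), hq_eq]
      _ ≤ ‖q‖ * (3 * ε / δ) := by
          rw [← hderiv_eq]
          exact mul_le_mul_of_nonneg_left hSchwarz (norm_nonneg q)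
      _ = 3 * ε / δ * ‖q‖ := mul_comm _ _

set_option maxHeartbeats 1000000 in
/-- **Vertical cone field invariance and expansion** (Proposition on 2D perturbations).
Let `U ⊆ ℂ` be open, `Ω ⊆ U × ℂ` a domain, `Ω̂ ⋐ Ω`, `f, g` holomorphic on `U` with
`κ < |f′| < K` and `|g′| < K` on `U` (`0 < κ ≤ K`). Then there are `ε₀, ϱ, c > 0`, depending
only on `κ, K, Ω, Ω̂`, such that for any `0 < ε ≤ ε₀` and any holomorphic `τ, χ` on `Ω` with
`|τ|, |χ| ≤ ε`, if `F(x,y) = (f(x)+τ(x,y), g(x)+χ(x,y))` is a biholomorphism of `Ω` onto its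
image, then at every point of `Ω̂` the inverse differential preserves the `ϱ`-vertical cone
and expands its vectors at rate at least `c·κ/(K·ε)`. -/
theorem vertical_cone_field_invariance
    (U : Set ℂ) (hU : IsOpen U)
    (Ω : Set (ℂ × ℂ)) (hΩopen : IsOpen Ω) (hΩconn : IsConnected Ω)
    (hΩsub : Ω ⊆ U ×ˢ (Set.univ : Set ℂ))
    (Ωhat : Set (ℂ × ℂ)) (hsub : closure Ωhat ⊆ Ω) (hcpt : IsCompact (closure Ωhat))
    (f g : ℂ → ℂ) (hf : DifferentiableOn ℂ f U) (hg : DifferentiableOn ℂ g U)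
    (κ K : ℝ) (hκ : 0 < κ) (hκK : κ ≤ K)
    (hf' : ∀ x ∈ U, κ < ‖deriv f x‖ ∧ ‖deriv f x‖ < K)
    (hg' : ∀ x ∈ U, ‖deriv g x‖ < K) :
    ∃ ε₀ > (0 : ℝ), ∃ ϱ > (0 : ℝ), ∃ c > (0 : ℝ),
      ∀ ε : ℝ, 0 < ε → ε ≤ ε₀ →
        ∀ τ χ : ℂ × ℂ → ℂ,
          DifferentiableOn ℂ τ Ω → DifferentiableOn ℂ χ Ω →
          (∀ p ∈ Ω, ‖τ p‖ ≤ ε) → (∀ p ∈ Ω, ‖χ p‖ ≤ ε) →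
          ∀ F : ℂ × ℂ → ℂ × ℂ,
            F = (fun p : ℂ × ℂ => (f p.1 + τ p, g p.1 + χ p)) →
            Set.InjOn F Ω →
            (∃ Finv : ℂ × ℂ → ℂ × ℂ,
              DifferentiableOn ℂ Finv (F '' Ω) ∧ ∀ p ∈ Ω, Finv (F p) = p) →
            ∀ p ∈ Ωhat, ∀ u v : ℂ, ‖u‖ ≤ ϱ * ‖v‖ → v ≠ 0 →
              ∀ ut vt : ℂ, fderiv ℂ F p (ut, vt) = (u, v) →
                ‖ut‖ < ϱ * ‖vt‖ ∧ c * (κ / (K * ε)) * ‖v‖ ≤ max ‖ut‖ ‖vt‖ := by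
  have hK : 0 < K := hκ.trans_le hκK
  obtain ⟨δ, hδpos, hδthick⟩ := hcpt.exists_thickening_subset_open hΩopen hsub
  have hball : ∀ p ∈ closure Ωhat, ball p δ ⊆ Ω := by
    intro p hp z hz
    exact hδthick (mem_thickening_iff.2 ⟨p, hp, hz⟩)
  refine ⟨δ * κ ^ 2 / (60 * K), by positivity, κ / (4 * K), by positivity,
    δ / 12, by positivity, ?_⟩
  intro ε hε hεle τ χ hτ hχ hbτ hbχ F hF _ _ p hp u v huv hv ut vt hDF
  subst hF
  have hpc : p ∈ closure Ωhat := subset_closure hp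
  have hpΩ : p ∈ Ω := hsub hpc
  have hx : p.1 ∈ U := (Set.mem_prod.1 (hΩsub hpΩ)).1
  -- derivative of F
  have hfd : HasDerivAt f (deriv f p.1) p.1 :=
    (hf.differentiableAt (hU.mem_nhds hx)).hasDerivAt
  have hgd : HasDerivAt g (deriv g p.1) p.1 :=
    (hg.differentiableAt (hU.mem_nhds hx)).hasDerivAt
  have hτd : HasFDerivAt τ (fderiv ℂ τ p) p :=
    (hτ.differentiableAt (hΩopen.mem_nhds hpΩ)).hasFDerivAt
  have hχd : HasFDerivAt χ (fderiv ℂ χ p) p :=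
    (hχ.differentiableAt (hΩopen.mem_nhds hpΩ)).hasFDerivAt
  have hfst : HasFDerivAt (fun q : ℂ × ℂ => f q.1)
      ((deriv f p.1) • (ContinuousLinearMap.fst ℂ ℂ ℂ)) p :=
    hfd.comp_hasFDerivAt p hasFDerivAt_fst
  have hgst : HasFDerivAt (fun q : ℂ × ℂ => g q.1)
      ((deriv g p.1) • (ContinuousLinearMap.fst ℂ ℂ ℂ)) p :=
    hgd.comp_hasFDerivAt p hasFDerivAt_fst
  have hFd : HasFDerivAt (fun q : ℂ × ℂ => (f q.1 + τ q, g q.1 + χ q))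
      ((((deriv f p.1) • (ContinuousLinearMap.fst ℂ ℂ ℂ)) + fderiv ℂ τ p).prod
       (((deriv g p.1) • (ContinuousLinearMap.fst ℂ ℂ ℂ)) + fderiv ℂ χ p)) p :=
    (hfst.add hτd).prodMk (hgst.add hχd)
  have hL := hFd.fderiv
  rw [hL] at hDF
  simp only [ContinuousLinearMap.prod_apply, ContinuousLinearMap.add_apply,
    ContinuousLinearMap.coe_smul', Pi.smul_apply, ContinuousLinearMap.coe_fst',
    smul_eq_mul, Prod.mk.injEq] at hDF
  obtain ⟨h1, h2⟩ := hDF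
  -- norms
  set a := ‖ut‖ with ha
  set b := ‖vt‖ with hbdef
  set m := ‖u‖ with hm
  set n := ‖v‖ with hn
  set η := 3 * ε / δ with hη_def
  have hηpos : 0 < η := by positivity
  have ha0 : 0 ≤ a := norm_nonneg _
  have hb0 : 0 ≤ b := norm_nonneg _
  have hm0 : 0 ≤ m := norm_nonneg _
  have hn0 : 0 ≤ n := norm_nonneg _
  have hτb : ‖fderiv ℂ τ p (ut, vt)‖ ≤ η * (a + b) := by
    calc ‖fderiv ℂ τ p (ut, vt)‖ ≤ η * ‖(ut, vt)‖ :=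
          cauchy_fderiv_bound hΩopen hτ hε hδpos hbτ (hball p hpc) (ut, vt)
      _ ≤ η * (a + b) := by
          apply mul_le_mul_of_nonneg_left _ hηpos.le
          rw [Prod.norm_def]
          exact max_le (by simp [ha, le_add_of_nonneg_right hb0])
            (by simp [hbdef, le_add_of_nonneg_left ha0])
  have hχb : ‖fderiv ℂ χ p (ut, vt)‖ ≤ η * (a + b) := by
    calc ‖fderiv ℂ χ p (ut, vt)‖ ≤ η * ‖(ut, vt)‖ :=
          cauchy_fderiv_bound hΩopen hχ hε hδpos hbχ (hball p hpc) (ut, vt)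
      _ ≤ η * (a + b) := by
          apply mul_le_mul_of_nonneg_left _ hηpos.le
          rw [Prod.norm_def]
          exact max_le (by simp [ha, le_add_of_nonneg_right hb0])
            (by simp [hbdef, le_add_of_nonneg_left ha0])
  -- scalar inequalities
  have hIneq1 : κ * a ≤ m + η * (a + b) := by
    have e1 : deriv f p.1 * ut = u - fderiv ℂ τ p (ut, vt) := by
      rw [← h1]; ring
    have : ‖deriv f p.1‖ * a ≤ m + η * (a + b) := by
      calc ‖deriv f p.1‖ * a = ‖deriv f p.1 * ut‖ := (norm_mul _ _).symm
        _ = ‖u - fderiv ℂ τ p (ut, vt)‖ := by rw [e1]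
        _ ≤ m + ‖fderiv ℂ τ p (ut, vt)‖ := norm_sub_le _ _
        _ ≤ m + η * (a + b) := by linarith
    have hκf : κ ≤ ‖deriv f p.1‖ := (hf' p.1 hx).1.le
    nlinarith [mul_le_mul_of_nonneg_right hκf ha0]
  have hIneq2 : n ≤ K * a + η * (a + b) := by
    have hgK : ‖deriv g p.1‖ ≤ K := (hg' p.1 hx).le
    calc n = ‖deriv g p.1 * ut + fderiv ℂ χ p (ut, vt)‖ := by rw [hn, ← h2]
      _ ≤ ‖deriv g p.1 * ut‖ + ‖fderiv ℂ χ p (ut, vt)‖ := norm_add_le _ _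
      _ = ‖deriv g p.1‖ * a + ‖fderiv ℂ χ p (ut, vt)‖ := by rw [norm_mul]
      _ ≤ K * a + η * (a + b) := by
          have := mul_le_mul_of_nonneg_right hgK ha0
          linarith
  have hη20 : 20 * K * η ≤ κ ^ 2 := by
    have h1 : 60 * K * ε ≤ κ ^ 2 * δ := by
      have h2 := mul_le_mul_of_nonneg_left hεle (by positivity : (0:ℝ) ≤ 60 * K)
      have heq : 60 * K * (δ * κ ^ 2 / (60 * K)) = κ ^ 2 * δ := by
        field_simp
      linarith [heq ▸ h2]
    have h3 : 20 * K * η = 60 * K * ε / δ := by rw [hη_def]; ring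
    rw [h3, div_le_iff₀ hδpos]
    linarith
  have huv' : 4 * K * m ≤ κ * n := by
    have := mul_le_mul_of_nonneg_left huv (by positivity : (0:ℝ) ≤ 4 * K)
    calc 4 * K * m ≤ 4 * K * (κ / (4 * K) * n) := this
      _ = κ * n := by field_simp
  -- key estimate: a ≤ (5η/(2κ)) b
  have hA : 2 * κ * a ≤ 5 * η * b := by
    nlinarith [mul_le_mul_of_nonneg_left hIneq2 hκ.le, mul_nonneg hηpos.le ha0,
      mul_nonneg hηpos.le hb0, mul_le_mul_of_nonneg_left hIneq1 (by positivity : (0:ℝ) ≤ 4 * K),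
      mul_nonneg (mul_nonneg hηpos.le ha0) hK.le]
  -- b ≠ 0
  have hbpos : 0 < b := by
    rcases lt_or_eq_of_le hb0 with h | h
    · exact h
    · exfalso
      have hb0' : b = 0 := h.symm
      have haz : a = 0 := by
        have : a ≤ 0 := by nlinarith
        linarith
      have hutz : ut = 0 := norm_eq_zero.1 haz
      have hvtz : vt = 0 := norm_eq_zero.1 hb0'
      apply hv
      rw [← h2, hutz, hvtz]
      simp
      exact map_zero _
  constructor
  · -- cone invariance
    show a < κ / (4 * K) * b
    rw [div_mul_eq_mul_div, lt_div_iff₀ (by positivity : (0:ℝ) < 4 * K)]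
    nlinarith [mul_le_mul_of_nonneg_left hA (by positivity : (0:ℝ) ≤ 4 * K),
      mul_le_mul_of_nonneg_right hη20 hb0, mul_pos hκ hbpos,
      mul_pos (mul_pos hκ hκ) hbpos]
  · -- expansion
    have key : κ * n ≤ 4 * K * η * b := by
      have t1 := mul_le_mul_of_nonneg_left hIneq2 (by positivity : (0:ℝ) ≤ 2 * κ)
      have t2 := mul_le_mul_of_nonneg_left hA hK.le
      have t3 := mul_le_mul_of_nonneg_left hA hηpos.le
      have t4 := mul_le_mul_of_nonneg_right hη20 (mul_nonneg hηpos.le hb0)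
      have t5 := mul_le_mul_of_nonneg_right hκK (mul_nonneg hηpos.le hb0)
      have t6 := mul_le_mul_of_nonneg_left t5 hκ.le
      nlinarith [t1, t2, t3, t4, t5, t6, mul_nonneg hηpos.le hb0]
    have hKε : (0:ℝ) < K * ε := by positivity
    have heq : δ / 12 * (κ / (K * ε)) * n = δ * κ * n / (12 * (K * ε)) := by
      field_simp
    rw [heq, div_le_iff₀ (by positivity)]
    have hηδ : η * δ = 3 * ε := by
      rw [hη_def]; field_simp
    calc δ * κ * n ≤ δ * (4 * K * η * b) := by
          have := mul_le_mul_of_nonneg_left key hδpos.le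
          linarith [mul_le_mul_of_nonneg_left key hδpos.le]
      _ = 12 * (K * ε) * b := by
          have : δ * (4 * K * η * b) = 4 * K * (η * δ) * b := by ring
          rw [this, hηδ]; ring
      _ ≤ max a b * (12 * (K * ε)) := by
          nlinarith [mul_le_mul_of_nonneg_right (le_max_right a b) hKε.le]
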